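/- Let α = (α_1 ≥ ⋯ ≥ α_l > 0) be a partition of n with all parts odd, let w ∈ C_α, and let 1 ≤ m ≤ n−1. Then (wδ)[⌈m/2⌉, n−⌊m/2⌋+1] + (wδ)[n−⌊m/2⌋, ⌈m/2⌉+1] ≤ n − min{k : α_1 + ⋯ + α_k ≥ m}. -/

import Mathlib

/-- For a permutation `u` of `{1,...,n}` (encoded on `Fin n`, with `k : Fin n`
representing the number `k+1`), `entryA u i j = #{1 ≤ k ≤ i : u(k) ≥ j}`. -/
def entryA {n : ℕ} (u : Equiv.Perm (Fin n)) (i j : ℕ) : ℕ :=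
  (Finset.univ.filter (fun k : Fin n => (k : ℕ) + 1 ≤ i ∧ j ≤ (u k : ℕ) + 1)).card

/-- `w ∈ C_α` for a partition `α = (α 1 ≥ ⋯ ≥ α ℓ > 0)` of `n` with odd parts:
there is a decomposition `{1,...,n} = I_1 ⊔ ⋯ ⊔ I_ℓ` with `|I_j| = α_j`, such that
the orbits of `w·δ` on `{1,...,n}` are exactly the sets `I_j`.  Here
`δ = Fin.revPerm` is the permutation `i ↦ n+1−i`. -/
def MemCClassA (n ℓ : ℕ) (α : ℕ → ℕ) (w : Equiv.Perm (Fin n)) : Prop :=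
  ∃ I : ℕ → Finset (Fin n),
    (∀ j, 1 ≤ j → j ≤ ℓ → (I j).card = α j) ∧
    (∀ j j', 1 ≤ j → j < j' → j' ≤ ℓ → Disjoint (I j) (I j')) ∧
    ((Finset.Icc 1 ℓ).biUnion I = Finset.univ) ∧
    (∀ j, 1 ≤ j → j ≤ ℓ → ∀ x ∈ I j, ∀ y : Fin n,
      ((w * Fin.revPerm).SameCycle x y ↔ y ∈ I j))

lemma card_filter_lt' (n c : ℕ) (hc : c ≤ n) :
    (Finset.univ.filter (fun k : Fin n => (k : ℕ) < c)).card = c := by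
  have h : ∀ x ∈ Finset.range c, x < n := fun x hx =>
    lt_of_lt_of_le (Finset.mem_range.mp hx) hc
  have : (Finset.univ.filter (fun k : Fin n => (k : ℕ) < c)) =
      (Finset.range c).attachFin h := by
    ext k
    simp [Finset.mem_attachFin, Finset.mem_range]
  rw [this, Finset.card_attachFin, Finset.card_range]

lemma card_filter_perm' {n : ℕ} (u : Equiv.Perm (Fin n)) (p : Fin n → Prop) [DecidablePred p] :
    (Finset.univ.filter (fun k => p (u k))).card = (Finset.univ.filter p).card := by
  apply Finset.card_bij (fun k _ => u k)
  · intro k hk; simp only [Finset.mem_filter, Finset.mem_univ, true_and] at hk ⊢; exact hk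
  · intro a _ b _ h; exact u.injective h
  · intro b hb
    refine ⟨u.symm b, ?_, by simp⟩
    simp only [Finset.mem_filter, Finset.mem_univ, true_and] at hb ⊢
    simpa using hb

lemma parity_filter' {n : ℕ} (u : Equiv.Perm (Fin n)) (C : Finset (Fin n))
    (hC : ∀ k ∈ C, u k ∈ C) (q : Fin n → Prop) [DecidablePred q] :
    Even (C.filter (fun k => ¬ (q k ↔ q (u k)))).card := by
  have himg : C.image u = C := by
    apply Finset.eq_of_subset_of_card_le
    · intro y hy; obtain ⟨x, hx, rfl⟩ := Finset.mem_image.mp hy; exact hC x hx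
    · rw [Finset.card_image_of_injective _ u.injective]
  have h2 : ((C.filter (fun k => ¬ (q k ↔ q (u k)))).card : ZMod 2) = 0 := by
    rw [Finset.card_filter, Nat.cast_sum]
    have hterm : ∀ k ∈ C, ((if ¬ (q k ↔ q (u k)) then 1 else 0 : ℕ) : ZMod 2)
        = (if q k then 1 else 0) + (if q (u k) then 1 else 0) := by
      intro k _
      by_cases h1 : q k <;> by_cases h2 : q (u k) <;> simp [h1, h2] <;> decide
    rw [Finset.sum_congr rfl hterm, Finset.sum_add_distrib]
    have hs : ∑ k ∈ C, (if q (u k) then (1 : ZMod 2) else 0)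
        = ∑ k ∈ C, (if q k then 1 else 0) := by
      conv_rhs => rw [← himg]
      rw [Finset.sum_image (fun a _ b _ h => u.injective h)]
    rw [hs, ← two_mul, show (2 : ZMod 2) = 0 by decide, zero_mul]
  exact even_iff_two_dvd.mpr ((ZMod.natCast_eq_zero_iff _ 2).mp h2)

lemma filter_split' {β : Type*} (s : Finset β) (r q : β → Prop)
    [DecidablePred r] [DecidablePred q] :
    (s.filter (fun k => r k ∧ q k)).card + (s.filter (fun k => r k ∧ ¬ q k)).card
      = (s.filter r).card := by
  rw [← Finset.filter_filter, ← Finset.filter_filter]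
  exact Finset.card_filter_add_card_filter_not q

lemma cycle_bound' {n : ℕ} (u : Equiv.Perm (Fin n)) (A B : Finset (Fin n))
    (hAB : ∀ k : Fin n, ¬ (k ∈ A ∧ k ∈ B)) (C : Finset (Fin n))
    (horb : ∀ x ∈ C, ∀ y, u.SameCycle x y ↔ y ∈ C)
    (hoddC : Odd C.card)
    (hne : (C ∩ (A ∪ B)).Nonempty) :
    (C.filter (fun k => (k ∈ A ∧ u k ∈ B) ∨ (k ∈ B ∧ u k ∈ A))).card + 1
      ≤ (C ∩ (A ∪ B)).card := by
  classical
  have hinv : ∀ k ∈ C, u k ∈ C := fun k hk =>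
    (horb k hk (u k)).mp ((Equiv.Perm.sameCycle_apply_right).mpr (Equiv.Perm.SameCycle.refl u k))
  by_cases hsub : C ⊆ A ∪ B
  · have hCS : C ∩ (A ∪ B) = C := Finset.inter_eq_left.mpr hsub
    rw [hCS]
    have heq : C.filter (fun k => (k ∈ A ∧ u k ∈ B) ∨ (k ∈ B ∧ u k ∈ A))
        = C.filter (fun k => ¬ ((k ∈ A) ↔ (u k ∈ A))) := by
      apply Finset.filter_congr
      intro k hk
      have h1 := hsub hk
      have h2 := hsub (hinv k hk)
      simp only [Finset.mem_union] at h1 h2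
      have h3 := hAB k
      have h4 := hAB (u k)
      constructor
      · rintro (⟨ha, hb⟩ | ⟨hb, ha⟩) <;> tauto
      · intro h; tauto
    rw [heq]
    have hev := parity_filter' u C hinv (· ∈ A)
    have hle : (C.filter (fun k => ¬ ((k ∈ A) ↔ (u k ∈ A)))).card ≤ C.card :=
      Finset.card_filter_le _ _
    obtain ⟨r, hr⟩ := hev
    obtain ⟨s, hs⟩ := hoddC
    omega
  · rw [Finset.not_subset] at hsub
    obtain ⟨z, hzC, hzS⟩ := hsub
    obtain ⟨x, hx⟩ := hne
    rw [Finset.mem_inter] at hx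
    have hzx : u.SameCycle z x := (horb z hzC x).mpr hx.1
    obtain ⟨i, _, hi⟩ := hzx.exists_pow_eq'
    have hex : ∃ j : ℕ, (u ^ j) z ∈ A ∪ B := ⟨i, by rw [hi]; exact hx.2⟩
    set i₀ := Nat.find hex with hi₀
    have hyS : (u ^ i₀) z ∈ A ∪ B := Nat.find_spec hex
    set y := (u ^ i₀) z with hy
    have hi₀pos : 0 < i₀ := by
      rcases Nat.eq_zero_or_pos i₀ with h | h
      · exfalso; apply hzS; rw [hy, h] at hyS; simpa using hyS
      · exact h
    have hyC : y ∈ C := (horb z hzC y).mp ⟨(i₀ : ℤ), by rw [zpow_natCast]⟩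
    have hpredS : (u ^ (i₀ - 1)) z ∉ A ∪ B := Nat.find_min hex (by omega)
    have hupred : u ((u ^ (i₀ - 1)) z) = y := by
      rw [hy, ← Equiv.Perm.mul_apply, ← pow_succ', Nat.sub_add_cancel hi₀pos]
    have hcardle : (C.filter (fun k => (k ∈ A ∧ u k ∈ B) ∨ (k ∈ B ∧ u k ∈ A))).card
        ≤ ((C ∩ (A ∪ B)).erase y).card := by
      apply Finset.card_le_card_of_injOn u
      · intro k hk
        rw [Finset.mem_coe, Finset.mem_filter] at hk
        obtain ⟨hkC, hcross⟩ := hk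
        have hukS : u k ∈ A ∪ B := by
          rcases hcross with ⟨_, h⟩ | ⟨_, h⟩
          · exact Finset.mem_union_right _ h
          · exact Finset.mem_union_left _ h
        have hkS : k ∈ A ∪ B := by
          rcases hcross with ⟨h, _⟩ | ⟨h, _⟩
          · exact Finset.mem_union_left _ h
          · exact Finset.mem_union_right _ h
        refine Finset.mem_erase.mpr ⟨?_, Finset.mem_inter.mpr ⟨hinv k hkC, hukS⟩⟩
        intro hky
        apply hpredS
        have hkz : k = (u ^ (i₀ - 1)) z := u.injective (by rw [hupred, hky])
        rw [← hkz]; exact hkS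
      · intro a _ b _ h; exact u.injective h
    have hyin : y ∈ C ∩ (A ∪ B) := Finset.mem_inter.mpr ⟨hyC, hyS⟩
    rw [Finset.card_erase_of_mem hyin] at hcardle
    have hpos : 1 ≤ (C ∩ (A ∪ B)).card := Finset.card_pos.mpr ⟨y, hyin⟩
    omega

lemma antitone_parts (ℓ : ℕ) (α : ℕ → ℕ) (hmono : ∀ i, 1 ≤ i → i < ℓ → α (i + 1) ≤ α i) :
    ∀ s t, 1 ≤ s → s ≤ t → t ≤ ℓ → α t ≤ α s := by
  intro s t hs hst htl
  induction t with
  | zero => omega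
  | succ t ih =>
    rcases Nat.eq_or_lt_of_le hst with h | h
    · rw [h]
    · exact le_trans (hmono t (by omega) (by omega)) (ih (by omega) (by omega))

lemma topsum' (ℓ : ℕ) (α : ℕ → ℕ) (hanti : ∀ s t, 1 ≤ s → s ≤ t → t ≤ ℓ → α t ≤ α s) :
    ∀ (J : Finset ℕ), J ⊆ Finset.Icc 1 ℓ → ∑ j ∈ J, α j ≤ ∑ i ∈ Finset.Icc 1 J.card, α i := by
  intro J
  induction J using Finset.strongInduction with
  | _ J ih =>
    intro hJ
    rcases J.eq_empty_or_nonempty with rfl | hne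
    · simp
    · have hMJ : J.max' hne ∈ J := J.max'_mem hne
      set M := J.max' hne with hM
      have hM1 : 1 ≤ M := (Finset.mem_Icc.mp (hJ hMJ)).1
      have hMℓ : M ≤ ℓ := (Finset.mem_Icc.mp (hJ hMJ)).2
      have hcard : J.card ≤ M := by
        have hsub : J ⊆ Finset.Icc 1 M := fun x hx =>
          Finset.mem_Icc.mpr ⟨(Finset.mem_Icc.mp (hJ hx)).1, J.le_max' x hx⟩
        have := Finset.card_le_card hsub
        rw [Nat.card_Icc] at this
        omega
      have hstep := ih (J.erase M) (Finset.erase_ssubset hMJ)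
        (fun x hx => hJ (Finset.mem_of_mem_erase hx))
      have hcards : (J.erase M).card = J.card - 1 := Finset.card_erase_of_mem hMJ
      have hJpos : 1 ≤ J.card := Finset.card_pos.mpr hne
      have hsplit : ∑ j ∈ J, α j = α M + ∑ j ∈ J.erase M, α j :=
        (Finset.add_sum_erase _ _ hMJ).symm
      have hIccsplit : ∑ i ∈ Finset.Icc 1 J.card, α i
          = α J.card + ∑ i ∈ Finset.Icc 1 (J.card - 1), α i := by
        have hins : Finset.Icc 1 J.card = insert J.card (Finset.Icc 1 (J.card - 1)) := by
          ext x
          simp only [Finset.mem_Icc, Finset.mem_insert]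
          omega
        rw [hins, Finset.sum_insert (by simp only [Finset.mem_Icc]; omega)]
      have hαM : α M ≤ α J.card := hanti J.card M hJpos hcard hMℓ
      rw [hcards] at hstep
      omega

/-- let `α = (α_1 ≥ ⋯ ≥ α_ℓ > 0)` be a partition of `n` with all parts odd,
let `w ∈ C_α` and `1 ≤ m ≤ n−1`.  Then
`(wδ)[⌈m/2⌉, n−⌊m/2⌋+1] + (wδ)[n−⌊m/2⌋, ⌈m/2⌉+1] ≤ n − min{k : α_1 + ⋯ + α_k ≥ m}`. -/
theorem stmt6 (n : ℕ) (hn : 1 ≤ n) (ℓ : ℕ) (α : ℕ → ℕ)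
    (hmono : ∀ i, 1 ≤ i → i < ℓ → α (i + 1) ≤ α i)
    (hpos : ∀ i, 1 ≤ i → i ≤ ℓ → 0 < α i)
    (hsupp : ∀ i, ℓ < i → α i = 0)
    (hsum : ∑ i ∈ Finset.Icc 1 ℓ, α i = n)
    (hodd : ∀ i, 1 ≤ i → i ≤ ℓ → Odd (α i))
    (w : Equiv.Perm (Fin n)) (hw : MemCClassA n ℓ α w)
    (m : ℕ) (hm1 : 1 ≤ m) (hm2 : m ≤ n - 1) :
    entryA (w * Fin.revPerm) ((m + 1) / 2) (n - m / 2 + 1) +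
        entryA (w * Fin.revPerm) (n - m / 2) ((m + 1) / 2 + 1) ≤
      n - sInf {k : ℕ | m ≤ ∑ i ∈ Finset.Icc 1 k, α i} := by
  classical
  obtain ⟨I, hcard, hdisj, hcover, horb⟩ := hw
  set u := w * Fin.revPerm with hu
  set a := (m + 1) / 2 with ha
  set b := m / 2 with hb
  set K := sInf {k : ℕ | m ≤ ∑ i ∈ Finset.Icc 1 k, α i} with hK
  have han : a ≤ n := by omega
  -- the sets A and B
  set A : Finset (Fin n) := Finset.univ.filter (fun k : Fin n => (k : ℕ) < a) with hA
  set B : Finset (Fin n) := Finset.univ.filter (fun k : Fin n => n - b ≤ (k : ℕ)) with hB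
  have hmemA : ∀ k : Fin n, k ∈ A ↔ (k : ℕ) < a := by
    intro k; rw [hA]; simp
  have hmemB : ∀ k : Fin n, k ∈ B ↔ n - b ≤ (k : ℕ) := by
    intro k; rw [hB]; simp
  have hABdisj : ∀ k : Fin n, ¬ (k ∈ A ∧ k ∈ B) := by
    intro k ⟨h1, h2⟩
    rw [hmemA] at h1
    rw [hmemB] at h2
    omega
  -- rewriting the two entryA terms
  have hT1 : entryA u a (n - b + 1)
      = (Finset.univ.filter (fun k : Fin n => k ∈ A ∧ u k ∈ B)).card := by
    unfold entryA
    congr 1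
    apply Finset.filter_congr
    intro k _
    rw [hmemA k, hmemB (u k)]
    omega
  have hT2 : entryA u (n - b) (a + 1)
      = (Finset.univ.filter (fun k : Fin n => k ∉ B ∧ u k ∉ A)).card := by
    unfold entryA
    congr 1
    apply Finset.filter_congr
    intro k _
    rw [hmemA (u k), hmemB k]
    omega
  -- basic cardinalities
  have hcA : A.card = a := by rw [hA]; exact card_filter_lt' n a han
  have hnotB : (Finset.univ.filter (fun k : Fin n => k ∉ B)).card = n - b := by
    have heq : Finset.univ.filter (fun k : Fin n => k ∉ B)
        = Finset.univ.filter (fun k : Fin n => (k : ℕ) < n - b) := by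
      apply Finset.filter_congr
      intro k _
      rw [hmemB k]
      omega
    rw [heq]
    exact card_filter_lt' n (n - b) (Nat.sub_le n b)
  have hcB : B.card = b := by
    have h := Finset.card_filter_add_card_filter_not
      (s := (Finset.univ : Finset (Fin n))) (p := fun k : Fin n => k ∈ B)
    have heq : Finset.univ.filter (fun k : Fin n => k ∈ B) = B := by
      ext k; simp
    rw [heq, hnotB, Finset.card_univ, Fintype.card_fin] at h
    have hble : b ≤ n := by omega
    omega
  -- the crossings set
  set Cr : Finset (Fin n) :=
    Finset.univ.filter (fun k : Fin n => (k ∈ A ∧ u k ∈ B) ∨ (k ∈ B ∧ u k ∈ A)) with hCr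
  have hCrcard : Cr.card = (Finset.univ.filter (fun k : Fin n => k ∈ A ∧ u k ∈ B)).card
      + (Finset.univ.filter (fun k : Fin n => k ∈ B ∧ u k ∈ A)).card := by
    rw [hCr, Finset.filter_or]
    apply Finset.card_union_of_disjoint
    rw [Finset.disjoint_left]
    intro k h1 h2
    rw [Finset.mem_filter] at h1 h2
    exact hABdisj k ⟨h1.2.1, h2.2.1⟩
  -- counting identities for T2
  have hfA : (Finset.univ.filter (fun k : Fin n => u k ∈ A)).card = a := by
    have h1 := card_filter_perm' u (fun x => x ∈ A)
    have h2 : Finset.univ.filter (fun x : Fin n => x ∈ A) = A := by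
      ext k; simp
    rw [h2] at h1
    exact h1.trans hcA
  have hE2 : (Finset.univ.filter (fun k : Fin n => k ∉ B ∧ u k ∉ A)).card
      + (Finset.univ.filter (fun k : Fin n => k ∉ B ∧ u k ∈ A)).card = n - b := by
    have h := filter_split' (Finset.univ : Finset (Fin n))
      (fun k => k ∉ B) (fun k => u k ∉ A)
    have hcg : Finset.univ.filter (fun k : Fin n => k ∉ B ∧ ¬ (u k ∉ A))
        = Finset.univ.filter (fun k : Fin n => k ∉ B ∧ u k ∈ A) := by
      apply Finset.filter_congr
      intro k _
      tauto
    rw [hcg, hnotB] at h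
    exact h
  have hE3 : (Finset.univ.filter (fun k : Fin n => k ∉ B ∧ u k ∈ A)).card
      + (Finset.univ.filter (fun k : Fin n => k ∈ B ∧ u k ∈ A)).card = a := by
    have h := filter_split' (Finset.univ : Finset (Fin n))
      (fun k => u k ∈ A) (fun k => k ∉ B)
    have hcg1 : Finset.univ.filter (fun k : Fin n => u k ∈ A ∧ k ∉ B)
        = Finset.univ.filter (fun k : Fin n => k ∉ B ∧ u k ∈ A) := by
      apply Finset.filter_congr
      intro k _
      tauto
    have hcg2 : Finset.univ.filter (fun k : Fin n => u k ∈ A ∧ ¬ (k ∉ B))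
        = Finset.univ.filter (fun k : Fin n => k ∈ B ∧ u k ∈ A) := by
      apply Finset.filter_congr
      intro k _
      tauto
    rw [hcg1, hcg2, hfA] at h
    exact h
  -- the set S = A ∪ B
  set S : Finset (Fin n) := A ∪ B with hS
  have hScard : S.card = m := by
    rw [hS, Finset.card_union_of_disjoint
      (Finset.disjoint_left.mpr (fun k h1 h2 => hABdisj k ⟨h1, h2⟩)), hcA, hcB]
    omega
  have hCrsubS : Cr ⊆ S := by
    intro k hk
    rw [hCr, Finset.mem_filter] at hk
    rw [hS, Finset.mem_union]
    rcases hk.2 with ⟨h, _⟩ | ⟨h, _⟩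
    · exact Or.inl h
    · exact Or.inr h
  -- partitioning by the cycles
  have hdisj' : ∀ j ∈ Finset.Icc 1 ℓ, ∀ j' ∈ Finset.Icc 1 ℓ, j ≠ j' →
      Disjoint (I j) (I j') := by
    intro j hj j' hj' hne
    rw [Finset.mem_Icc] at hj hj'
    rcases lt_or_gt_of_ne hne with h | h
    · exact hdisj j j' hj.1 h hj'.2
    · exact (hdisj j' j hj'.1 h hj.2).symm
  have hpart : ∀ T : Finset (Fin n), T.card = ∑ j ∈ Finset.Icc 1 ℓ, (I j ∩ T).card := by
    intro T
    have hT : T = (Finset.Icc 1 ℓ).biUnion (fun j => I j ∩ T) := by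
      ext k
      simp only [Finset.mem_biUnion, Finset.mem_inter]
      constructor
      · intro hk
        have hk2 : k ∈ (Finset.Icc 1 ℓ).biUnion I := by
          rw [hcover]; exact Finset.mem_univ k
        obtain ⟨j, hj, hkj⟩ := Finset.mem_biUnion.mp hk2
        exact ⟨j, hj, hkj, hk⟩
      · rintro ⟨j, _, _, hk⟩
        exact hk
    conv_lhs => rw [hT]
    apply Finset.card_biUnion
    intro j hj j' hj' hne
    exact Finset.disjoint_of_subset_left Finset.inter_subset_left
      (Finset.disjoint_of_subset_right Finset.inter_subset_left (hdisj' j hj j' hj' hne))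
  set J : Finset ℕ := (Finset.Icc 1 ℓ).filter (fun j => (I j ∩ S).Nonempty) with hJ
  have hJsub : J ⊆ Finset.Icc 1 ℓ := Finset.filter_subset _ _
  have htrim : ∀ T : Finset (Fin n), T ⊆ S → T.card = ∑ j ∈ J, (I j ∩ T).card := by
    intro T hTS
    rw [hpart T]
    refine (Finset.sum_subset hJsub ?_).symm
    intro j hjIcc hjJ
    have hempty : I j ∩ S = ∅ := by
      by_contra hne
      exact hjJ (by rw [hJ, Finset.mem_filter]
                    exact ⟨hjIcc, Finset.nonempty_iff_ne_empty.mpr hne⟩)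
    have : I j ∩ T ⊆ I j ∩ S :=
      Finset.inter_subset_inter (subset_refl _) hTS
    rw [Finset.card_eq_zero]
    rw [hempty] at this
    exact Finset.subset_empty.mp this
  -- per-cycle bound
  have hcyc : ∀ j ∈ J, (I j ∩ Cr).card + 1 ≤ (I j ∩ S).card := by
    intro j hjJ
    rw [hJ, Finset.mem_filter] at hjJ
    obtain ⟨hjIcc, hjne⟩ := hjJ
    rw [Finset.mem_Icc] at hjIcc
    have h1 := horb j hjIcc.1 hjIcc.2
    have hodd' : Odd (I j).card := by
      rw [hcard j hjIcc.1 hjIcc.2]; exact hodd j hjIcc.1 hjIcc.2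
    have hIC : I j ∩ Cr = (I j).filter
        (fun k => (k ∈ A ∧ u k ∈ B) ∨ (k ∈ B ∧ u k ∈ A)) := by
      rw [hCr]
      ext k
      simp only [Finset.mem_inter, Finset.mem_filter, Finset.mem_univ, true_and]
    rw [hIC, hS]
    exact cycle_bound' u A B hABdisj (I j) h1 hodd' (hS ▸ hjne)
  have hmain : Cr.card + J.card ≤ m := by
    have h1 : Cr.card = ∑ j ∈ J, (I j ∩ Cr).card := htrim Cr hCrsubS
    have h2 : m = ∑ j ∈ J, (I j ∩ S).card := by
      rw [← hScard]; exact htrim S (subset_refl S)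
    have h3 : ∑ j ∈ J, ((I j ∩ Cr).card + 1) ≤ ∑ j ∈ J, (I j ∩ S).card :=
      Finset.sum_le_sum hcyc
    rw [Finset.sum_add_distrib, Finset.sum_const, smul_eq_mul, mul_one] at h3
    omega
  have hJK : K ≤ J.card := by
    rw [hK]
    apply Nat.sInf_le
    show m ≤ ∑ i ∈ Finset.Icc 1 J.card, α i
    have h1 : m = ∑ j ∈ J, (I j ∩ S).card := by
      rw [← hScard]; exact htrim S (subset_refl S)
    have h2 : ∑ j ∈ J, (I j ∩ S).card ≤ ∑ j ∈ J, α j := by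
      apply Finset.sum_le_sum
      intro j hj
      have hjIcc := Finset.mem_Icc.mp (hJsub hj)
      rw [← hcard j hjIcc.1 hjIcc.2]
      exact Finset.card_le_card Finset.inter_subset_left
    have h3 := topsum' ℓ α (antitone_parts ℓ α hmono) J hJsub
    omega
  rw [hT1, hT2]
  omega
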